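/- arXiv:2401.08929 — 2 statements merged into one kernel-verified Lean document; each statement's English description precedes it below -/
import Mathlib

section
/- Assume ε_i > 0 for every i ∈ M. Then at every Nash equilibrium ā of 𝒢(a_0,b), every firm sources its own product category from itself: for every ℓ ∈ L and every i ∈ M_ℓ, one has ā_{i,i} = b_{i,ℓ} (and consequently ā_{i,j} = 0 for every j ∈ M_ℓ with j ≠ i). -/
noncomputable section

open Matrix Finset

/-- Strategy set S_i(b). -/
def Strat (m l : ℕ) (cat : Fin m → Fin l) (b : Fin m → Fin l → ℝ) (i : Fin m) :
    Set (Fin m → ℝ) :=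
  { x | (∀ j, 0 ≤ x j) ∧
        ∀ ℓ : Fin l, ∑ j ∈ univ.filter (fun j => cat j = ℓ), x j = b i ℓ }

/-- ε_i := 1 − b_{i,0} − Σ_ℓ b_{i,ℓ}. -/
def eps (m l : ℕ) (b0 : Fin m → ℝ) (b : Fin m → Fin l → ℝ) (i : Fin m) : ℝ :=
  1 - b0 i - ∑ ℓ, b i ℓ

/-- The matrix Ã_M: (Ã_M)_{j,i} = a_{i,j} + ε_i a_{0,j}. -/
def AtM (m l : ℕ) (a0 b0 : Fin m → ℝ) (b : Fin m → Fin l → ℝ)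
    (a : Fin m → Fin m → ℝ) : Matrix (Fin m) (Fin m) ℝ :=
  Matrix.of fun j i => a i j + eps m l b0 b i * a0 j

/-- Payoff π_i(a) = ε_i v_i(a), with v(a) = (I − Ã_M)⁻¹ a_0. -/
def payoff (m l : ℕ) (a0 b0 : Fin m → ℝ) (b : Fin m → Fin l → ℝ)
    (i : Fin m) (a : Fin m → Fin m → ℝ) : ℝ :=
  eps m l b0 b i * ((1 - AtM m l a0 b0 b a)⁻¹.mulVec a0 i)

/-- If `u = c + C u` with `C` nonnegative with column sums `≤ θ < 1` and `c ≥ 0`,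
then `u ≥ 0`. -/
lemma aux_nonneg {m : ℕ} (C : Matrix (Fin m) (Fin m) ℝ) (hC : ∀ j k, 0 ≤ C j k)
    (θ : ℝ) (hθ : θ < 1) (hcol : ∀ k, ∑ j, C j k ≤ θ)
    (c u : Fin m → ℝ) (hc : ∀ j, 0 ≤ c j)
    (hu : ∀ j, u j = c j + ∑ k, C j k * u k) : ∀ j, 0 ≤ u j := by
  by_contra hcon
  push_neg at hcon
  obtain ⟨j0, hj0⟩ := hcon
  set P := Finset.univ.filter (fun j => u j < 0) with hPdef
  have hmemP : ∀ j, j ∈ P ↔ u j < 0 := by intro j; simp [hPdef]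
  have hj0P : j0 ∈ P := (hmemP j0).2 hj0
  have hSneg : ∑ j ∈ P, u j < 0 :=
    Finset.sum_neg (fun j hj => (hmemP j).1 hj) ⟨j0, hj0P⟩
  have hgk : ∀ k, ∑ j ∈ P, C j k ≤ θ := fun k =>
    le_trans (Finset.sum_le_sum_of_subset_of_nonneg (Finset.subset_univ P)
      (fun j _ _ => hC j k)) (hcol k)
  have hS1 : ∑ j ∈ P, u j = ∑ j ∈ P, c j + ∑ k, (∑ j ∈ P, C j k) * u k := by
    rw [Finset.sum_congr rfl (fun j _ => hu j), Finset.sum_add_distrib]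
    congr 1
    rw [Finset.sum_comm]
    exact Finset.sum_congr rfl (fun k _ => (Finset.sum_mul ..).symm)
  have hsplit : ∑ k, (∑ j ∈ P, C j k) * u k
      = ∑ k ∈ P, (∑ j ∈ P, C j k) * u k
        + ∑ k ∈ Finset.univ.filter (fun k => ¬ u k < 0), (∑ j ∈ P, C j k) * u k := by
    rw [hPdef, Finset.sum_filter_add_sum_filter_not]
  have h1 : ∑ k ∈ P, θ * u k ≤ ∑ k ∈ P, (∑ j ∈ P, C j k) * u k := by
    apply Finset.sum_le_sum
    intro k hk
    exact mul_le_mul_of_nonpos_right (hgk k) (le_of_lt ((hmemP k).1 hk))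
  have h2 : (0:ℝ) ≤ ∑ k ∈ Finset.univ.filter (fun k => ¬ u k < 0), (∑ j ∈ P, C j k) * u k := by
    apply Finset.sum_nonneg
    intro k hk
    have hk' : 0 ≤ u k := le_of_not_gt (by simpa using (Finset.mem_filter.1 hk).2)
    exact mul_nonneg (Finset.sum_nonneg (fun j _ => hC j k)) hk'
  have hcP : (0:ℝ) ≤ ∑ j ∈ P, c j := Finset.sum_nonneg (fun j _ => hc j)
  have hkey : θ * ∑ j ∈ P, u j ≤ ∑ j ∈ P, u j := by
    calc θ * ∑ j ∈ P, u j = ∑ k ∈ P, θ * u k := by rw [Finset.mul_sum]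
    _ ≤ ∑ k ∈ P, (∑ j ∈ P, C j k) * u k := h1
    _ ≤ ∑ j ∈ P, c j + (∑ k ∈ P, (∑ j ∈ P, C j k) * u k
        + ∑ k ∈ Finset.univ.filter (fun k => ¬ u k < 0), (∑ j ∈ P, C j k) * u k) := by
        linarith
    _ = ∑ j ∈ P, u j := by rw [← hsplit, ← hS1]
  nlinarith

/-- Invertibility. -/
lemma aux_det_ne {m : ℕ} (C : Matrix (Fin m) (Fin m) ℝ) (hC : ∀ j k, 0 ≤ C j k)
    (θ : ℝ) (hθ : θ < 1) (hcol : ∀ k, ∑ j, C j k ≤ θ) :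
    ((1 : Matrix (Fin m) (Fin m) ℝ) - C).det ≠ 0 := by
  intro hdet
  obtain ⟨v, hvne, hv⟩ := (Matrix.exists_mulVec_eq_zero_iff).2 hdet
  have hveq : ∀ j, v j = 0 + ∑ k, C j k * v k := by
    intro j
    have h := congrFun hv j
    rw [Matrix.sub_mulVec, Pi.sub_apply, Matrix.one_mulVec] at h
    have h2 : (C *ᵥ v) j = ∑ k, C j k * v k := by
      simp [Matrix.mulVec, dotProduct]
    rw [h2] at h
    simp only [Pi.zero_apply] at h
    linarith
  have hpos := aux_nonneg C hC θ hθ hcol 0 v (by intro j; simp) (by simpa using hveq)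
  have hveq' : ∀ j, (-v) j = 0 + ∑ k, C j k * (-v) k := by
    intro j
    have h := hveq j
    simp only [Pi.neg_apply, zero_add, mul_neg, Finset.sum_neg_distrib, neg_inj]
    linarith
  have hneg := aux_nonneg C hC θ hθ hcol 0 (-v) (by intro j; simp) hveq'
  apply hvne
  funext j
  have := hneg j
  simp at this
  exact le_antisymm this (hpos j)

lemma aux_inv_eq {m : ℕ} (C : Matrix (Fin m) (Fin m) ℝ)
    (h : IsUnit ((1 : Matrix (Fin m) (Fin m) ℝ) - C).det) (c : Fin m → ℝ) :
    ∀ k, (((1 : Matrix (Fin m) (Fin m) ℝ) - C)⁻¹.mulVec c) k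
      = c k + ∑ r, C k r * (((1 : Matrix (Fin m) (Fin m) ℝ) - C)⁻¹.mulVec c) r := by
  intro k
  have h1 : ((1 : Matrix (Fin m) (Fin m) ℝ) - C) *ᵥ (((1 : Matrix (Fin m) (Fin m) ℝ) - C)⁻¹ *ᵥ c) = c := by
    rw [Matrix.mulVec_mulVec, Matrix.mul_nonsing_inv _ h, Matrix.one_mulVec]
  have h2 := congrFun h1 k
  rw [Matrix.sub_mulVec, Pi.sub_apply, Matrix.one_mulVec] at h2
  have h3 : (C *ᵥ (((1 : Matrix (Fin m) (Fin m) ℝ) - C)⁻¹ *ᵥ c)) k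
      = ∑ r, C k r * (((1 : Matrix (Fin m) (Fin m) ℝ) - C)⁻¹ *ᵥ c) r := by
    simp [Matrix.mulVec, dotProduct]
  rw [h3] at h2
  linarith

theorem nash_own_supply
    (m l : ℕ) (cat : Fin m → Fin l) (hcat : Function.Surjective cat)
    (a0 : Fin m → ℝ) (ha0 : ∀ i, 0 < a0 i) (ha0sum : ∑ i, a0 i = 1)
    (b0 : Fin m → ℝ) (hb0 : ∀ i, 0 < b0 i)
    (b : Fin m → Fin l → ℝ) (hb : ∀ i ℓ, 0 ≤ b i ℓ)
    (hble : ∀ i, b0 i + ∑ ℓ, b i ℓ ≤ 1)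
    (heps : ∀ i, 0 < eps m l b0 b i)
    (abar : Fin m → Fin m → ℝ) (habar : ∀ j, abar j ∈ Strat m l cat b j)
    (hnash : ∀ i : Fin m, ∀ x ∈ Strat m l cat b i,
      payoff m l a0 b0 b i (Function.update abar i x) ≤ payoff m l a0 b0 b i abar) :
    ∀ ℓ : Fin l, ∀ i : Fin m, cat i = ℓ →
      abar i i = b i ℓ ∧ ∀ j : Fin m, j ≠ i → cat j = ℓ → abar i j = 0 := by
  intro ℓ i hiℓ
  classical
  -- basic quantities
  set β := Finset.univ.inf' ⟨i, Finset.mem_univ i⟩ b0 with hβdef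
  have hβpos : 0 < β := by
    rw [hβdef]
    exact (Finset.lt_inf'_iff _).mpr (fun k _ => hb0 k)
  have hβle : ∀ k, β ≤ b0 k := fun k => Finset.inf'_le _ (Finset.mem_univ k)
  have hβle1 : β ≤ 1 := by
    have h1 := hble i
    have h2 : (0:ℝ) ≤ ∑ ℓ', b i ℓ' := Finset.sum_nonneg (fun ℓ' _ => hb i ℓ')
    have := hβle i
    linarith
  set θ : ℝ := 1 - β with hθdef
  have hθ : θ < 1 := by rw [hθdef]; linarith
  -- sums of strategies over all firms
  have hsum_strat : ∀ (i' : Fin m) (x : Fin m → ℝ), x ∈ Strat m l cat b i' →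
      ∑ j, x j = ∑ ℓ', b i' ℓ' := by
    intro i' x hx
    rw [← Finset.sum_fiberwise Finset.univ cat x]
    exact Finset.sum_congr rfl (fun ℓ' _ => hx.2 ℓ')
  have hepsum : ∀ k, ∑ ℓ', b k ℓ' + eps m l b0 b k = 1 - b0 k := by
    intro k; simp only [eps]; ring
  -- the matrix C : Ã with column i zeroed out
  set C : Matrix (Fin m) (Fin m) ℝ :=
    Matrix.of (fun j k => if k = i then 0 else abar k j + eps m l b0 b k * a0 j) with hCdef
  have hCapp : ∀ j k, C j k = if k = i then 0 else abar k j + eps m l b0 b k * a0 j :=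
    fun j k => rfl
  have hCcoli : ∀ r, C r i = 0 := fun r => by rw [hCapp]; simp
  have hCnn : ∀ j k, 0 ≤ C j k := by
    intro j k
    rw [hCapp]
    split
    · exact le_refl 0
    · exact add_nonneg ((habar k).1 j) (le_of_lt (mul_pos (heps k) (ha0 j)))
  have hCcol : ∀ k, ∑ j, C j k ≤ θ := by
    intro k
    by_cases hk : k = i
    · subst hk
      rw [Finset.sum_congr rfl (fun j _ => hCcoli j)]
      simp only [Finset.sum_const_zero]
      linarith
    · have h1 : ∑ j, C j k = ∑ j, abar k j + eps m l b0 b k * ∑ j, a0 j := by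
        rw [Finset.mul_sum, ← Finset.sum_add_distrib]
        exact Finset.sum_congr rfl (fun j _ => by rw [hCapp, if_neg hk])
      rw [h1, ha0sum, mul_one, hsum_strat k (abar k) (habar k), hepsum k]
      have := hβle k
      linarith
  have hdetC : ((1 : Matrix (Fin m) (Fin m) ℝ) - C).det ≠ 0 := aux_det_ne C hCnn θ hθ hCcol
  have hunitC : IsUnit ((1 : Matrix (Fin m) (Fin m) ℝ) - C).det := isUnit_iff_ne_zero.2 hdetC
  set N := ((1 : Matrix (Fin m) (Fin m) ℝ) - C)⁻¹ with hNdef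
  have hNC : N * (1 - C) = 1 := Matrix.nonsing_inv_mul _ hunitC
  -- column equations for N
  have hNcol : ∀ j k, N k j = (if k = j then (1:ℝ) else 0) + ∑ r, C k r * N r j := by
    intro j k
    have h := aux_inv_eq C hunitC (fun r => if r = j then (1:ℝ) else 0) k
    have hcolj : ∀ k', (N.mulVec (fun r => if r = j then (1:ℝ) else 0)) k' = N k' j := by
      intro k'
      simp [hNdef, Matrix.mulVec, dotProduct, mul_ite, Finset.sum_ite_eq']
    rw [hcolj] at h
    rw [Finset.sum_congr rfl (fun r _ => by rw [hcolj r])] at h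
    simpa using h
  have hNnn : ∀ j k, 0 ≤ N k j := by
    intro j
    exact aux_nonneg C hCnn θ hθ hCcol (fun k => if k = j then (1:ℝ) else 0)
      (fun k => N k j) (by intro k; split <;> norm_num) (fun k => hNcol j k)
  have hNii : N i i = 1 := by
    have h := congrFun (congrFun hNC i) i
    rw [Matrix.mul_apply] at h
    have h2 : ∀ r, N i r * ((1 : Matrix (Fin m) (Fin m) ℝ) - C) r i
        = (if r = i then N i r else 0) := by
      intro r
      rw [Matrix.sub_apply, hCcoli r, sub_zero, Matrix.one_apply]
      split <;> simp
    rw [Finset.sum_congr rfl (fun r _ => h2 r), Finset.sum_ite_eq'] at h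
    simpa using h
  -- strict bound on the off-diagonal entries of row i of N
  have hNlt : ∀ j, j ≠ i → N i j < 1 := by
    intro j hj
    by_contra hge
    push_neg at hge
    set u : Fin m → ℝ := fun k => N k j with hudef
    have hueq : ∀ k, u k = (if k = j then (1:ℝ) else 0) + ∑ r, C k r * u r :=
      fun k => hNcol j k
    have hunn : ∀ k, 0 ≤ u k := hNnn j
    have htot : ∑ k, u k = 1 + ∑ r, (∑ k, C k r) * u r := by
      calc ∑ k, u k = ∑ k, ((if k = j then (1:ℝ) else 0) + ∑ r, C k r * u r) :=
            Finset.sum_congr rfl (fun k _ => hueq k)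
      _ = (∑ k, (if k = j then (1:ℝ) else 0)) + ∑ k, ∑ r, C k r * u r :=
            Finset.sum_add_distrib
      _ = 1 + ∑ r, (∑ k, C k r) * u r := by
            have e1 : ∑ k, (if k = j then (1:ℝ) else 0) = 1 := by simp
            have e2 : ∑ k, ∑ r, C k r * u r = ∑ r, (∑ k, C k r) * u r := by
              rw [Finset.sum_comm]
              exact Finset.sum_congr rfl (fun r _ => (Finset.sum_mul ..).symm)
            rw [e1, e2]
    have hcsum : ∀ r, r ≠ i → ∑ k, C k r = 1 - b0 r := by
      intro r hr
      have h1 : ∑ k, C k r = ∑ k, abar r k + eps m l b0 b r * ∑ k, a0 k := by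
        rw [Finset.mul_sum, ← Finset.sum_add_distrib]
        exact Finset.sum_congr rfl (fun k _ => by rw [hCapp, if_neg hr])
      rw [h1, ha0sum, mul_one, hsum_strat r (abar r) (habar r), hepsum r]
    -- split sums at i
    have hsplit1 : ∑ k, u k = u i + ∑ k ∈ Finset.univ.erase i, u k :=
      (Finset.add_sum_erase Finset.univ u (Finset.mem_univ i)).symm
    have hsplit2 : ∑ r, (∑ k, C k r) * u r
        = ∑ r ∈ Finset.univ.erase i, (1 - b0 r) * u r := by
      have h0 : ∑ r, (∑ k, C k r) * u r
          = (∑ k, C k i) * u i + ∑ r ∈ Finset.univ.erase i, (∑ k, C k r) * u r :=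
        (Finset.add_sum_erase Finset.univ (fun r => (∑ k, C k r) * u r)
          (Finset.mem_univ i)).symm
      have hci : ∑ k, C k i = 0 := by
        rw [Finset.sum_congr rfl (fun k _ => hCcoli k)]; simp
      rw [h0, hci, zero_mul, zero_add]
      exact Finset.sum_congr rfl (fun r hr => by
        rw [hcsum r (Finset.mem_erase.1 hr).1])
    have hsub : ∑ r ∈ Finset.univ.erase i, (1 - b0 r) * u r
        = ∑ r ∈ Finset.univ.erase i, u r - ∑ r ∈ Finset.univ.erase i, b0 r * u r := by
      rw [← Finset.sum_sub_distrib]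
      exact Finset.sum_congr rfl (fun r _ => by ring)
    have hui : u i = 1 - ∑ r ∈ Finset.univ.erase i, b0 r * u r := by
      rw [hsplit1, hsplit2, hsub] at htot
      linarith
    have hsnn : (0:ℝ) ≤ ∑ r ∈ Finset.univ.erase i, b0 r * u r :=
      Finset.sum_nonneg (fun r _ => mul_nonneg (hb0 r).le (hunn r))
    have hsum0 : ∑ r ∈ Finset.univ.erase i, b0 r * u r = 0 := by linarith
    have hall0 : ∀ r ∈ Finset.univ.erase i, b0 r * u r = 0 :=
      (Finset.sum_eq_zero_iff_of_nonneg
        (fun r _ => mul_nonneg (hb0 r).le (hunn r))).1 hsum0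
    have hu0 : ∀ r, r ≠ i → u r = 0 := by
      intro r hr
      have := hall0 r (Finset.mem_erase.2 ⟨hr, Finset.mem_univ r⟩)
      have hb0r := hb0 r
      rcases mul_eq_zero.1 this with h | h
      · exact absurd h (ne_of_gt hb0r)
      · exact h
    have hrow : u i = 0 := by
      have h := hueq i
      have h1 : ∑ r, C i r * u r = 0 := by
        apply Finset.sum_eq_zero
        intro r _
        by_cases hr : r = i
        · rw [hr, hCcoli i]; ring
        · rw [hu0 r hr]; ring
      rw [h1, if_neg (Ne.symm hj)] at h
      simpa using h
    rw [hudef] at hrow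
    simp only at hrow
    -- u i = N i j ≥ 1 contradiction
    rw [hrow] at hge
    linarith
  -- the vector w = N a0
  set w : Fin m → ℝ := N.mulVec a0 with hwdef
  have hweq : ∀ k, w k = a0 k + ∑ r, C k r * w r := fun k => aux_inv_eq C hunitC a0 k
  have hwnn : ∀ k, 0 ≤ w k :=
    aux_nonneg C hCnn θ hθ hCcol a0 w (fun k => (ha0 k).le) hweq
  have hwipos : 0 < w i := by
    have h := hweq i
    have h1 : (0:ℝ) ≤ ∑ r, C i r * w r :=
      Finset.sum_nonneg (fun r _ => mul_nonneg (hCnn i r) (hwnn r))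
    have := ha0 i
    linarith
  have hwi : w i = ∑ r, N i r * a0 r := by
    rw [hwdef]; simp [Matrix.mulVec, dotProduct]
  -- key payoff formula for any deviation of firm i
  have key : ∀ x ∈ Strat m l cat b i,
      payoff m l a0 b0 b i (Function.update abar i x)
        = eps m l b0 b i * (w i /
            (1 - (∑ r, N i r * x r) - eps m l b0 b i * w i))
      ∧ 0 < 1 - (∑ r, N i r * x r) - eps m l b0 b i * w i := by
    intro x hx
    set A := AtM m l a0 b0 b (Function.update abar i x) with hAdef
    have hAapp : ∀ j k, A j k = C j k
        + (if k = i then x j + eps m l b0 b i * a0 j else 0) := by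
      intro j k
      show (Function.update abar i x) k j + eps m l b0 b k * a0 j = _
      by_cases hk : k = i
      · rw [hk, Function.update_self, hCcoli j, if_pos rfl, zero_add]
      · rw [Function.update_of_ne hk, hCapp, if_neg hk, if_neg hk, add_zero]
    have hAnn : ∀ j k, 0 ≤ A j k := by
      intro j k
      rw [hAapp]
      apply add_nonneg (hCnn j k)
      split
      · exact add_nonneg (hx.1 j) (le_of_lt (mul_pos (heps i) (ha0 j)))
      · exact le_refl 0
    have hAcol : ∀ k, ∑ j, A j k ≤ θ := by
      intro k
      by_cases hk : k = i
      · rw [hk]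
        have h1 : ∑ j, A j i = ∑ j, x j + eps m l b0 b i * ∑ j, a0 j := by
          rw [Finset.mul_sum, ← Finset.sum_add_distrib]
          refine Finset.sum_congr rfl (fun j _ => ?_)
          rw [hAapp, hCcoli j, if_pos rfl, zero_add]
        rw [h1, ha0sum, mul_one, hsum_strat i x hx, hepsum i]
        have := hβle i
        linarith
      · have h1 : ∑ j, A j k = ∑ j, C j k := by
          refine Finset.sum_congr rfl (fun j _ => ?_)
          rw [hAapp, if_neg hk, add_zero]
        rw [h1]
        exact hCcol k
    have hdetA : ((1 : Matrix (Fin m) (Fin m) ℝ) - A).det ≠ 0 :=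
      aux_det_ne A hAnn θ hθ hAcol
    have hunitA : IsUnit ((1 : Matrix (Fin m) (Fin m) ℝ) - A).det :=
      isUnit_iff_ne_zero.2 hdetA
    set v : Fin m → ℝ := ((1 : Matrix (Fin m) (Fin m) ℝ) - A)⁻¹.mulVec a0 with hvdef
    have hpay : payoff m l a0 b0 b i (Function.update abar i x)
        = eps m l b0 b i * v i := by
      rw [payoff, hvdef, hAdef]
    have hveq : ∀ k, v k = a0 k + ∑ r, A k r * v r := fun k => aux_inv_eq A hunitA a0 k
    have hvnn : ∀ k, 0 ≤ v k :=
      aux_nonneg A hAnn θ hθ hAcol a0 v (fun k => (ha0 k).le) hveq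
    have hvipos : 0 < v i := by
      have h := hveq i
      have h1 : (0:ℝ) ≤ ∑ r, A i r * v r :=
        Finset.sum_nonneg (fun r _ => mul_nonneg (hAnn i r) (hvnn r))
      have := ha0 i
      linarith
    -- rewrite in terms of C
    have hveq2 : ∀ k, v k = (a0 k + v i * (x k + eps m l b0 b i * a0 k))
        + ∑ r, C k r * v r := by
      intro k
      have h := hveq k
      have h1 : ∑ r, A k r * v r = ∑ r, C k r * v r
          + v i * (x k + eps m l b0 b i * a0 k) := by
        have h2 : ∀ r, A k r * v r = C k r * v r
            + (if r = i then (x k + eps m l b0 b i * a0 k) * v r else 0) := by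
          intro r
          rw [hAapp]
          split <;> ring
        rw [Finset.sum_congr rfl (fun r _ => h2 r), Finset.sum_add_distrib,
          Finset.sum_ite_eq']
        simp only [Finset.mem_univ, if_true]
        ring
      rw [h1] at h
      rw [h]; ring
    -- apply N to recover v from the C-system
    have hvc : ((1 : Matrix (Fin m) (Fin m) ℝ) - C) *ᵥ v
        = fun k => a0 k + v i * (x k + eps m l b0 b i * a0 k) := by
      funext k
      rw [Matrix.sub_mulVec, Pi.sub_apply, Matrix.one_mulVec]
      have h1 : (C *ᵥ v) k = ∑ r, C k r * v r := by
        simp [Matrix.mulVec, dotProduct]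
      rw [h1]
      have := hveq2 k
      linarith
    have hvN : v = N *ᵥ (fun k => a0 k + v i * (x k + eps m l b0 b i * a0 k)) := by
      rw [← hvc, hNdef, Matrix.mulVec_mulVec, Matrix.nonsing_inv_mul _ hunitC,
        Matrix.one_mulVec]
    have hvi_eq : v i = w i + v i * ((∑ r, N i r * x r) + eps m l b0 b i * w i) := by
      have h := congrFun hvN i
      have h1 : (N *ᵥ (fun k => a0 k + v i * (x k + eps m l b0 b i * a0 k))) i
          = ∑ r, N i r * (a0 r + v i * (x r + eps m l b0 b i * a0 r)) := by
        simp [Matrix.mulVec, dotProduct]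
      rw [h1] at h
      have h2 : ∑ r, N i r * (a0 r + v i * (x r + eps m l b0 b i * a0 r))
          = (∑ r, N i r * a0 r) + (v i * ∑ r, N i r * x r)
              + ((v i * eps m l b0 b i) * ∑ r, N i r * a0 r) := by
        rw [Finset.mul_sum, Finset.mul_sum, ← Finset.sum_add_distrib,
          ← Finset.sum_add_distrib]
        exact Finset.sum_congr rfl (fun r _ => by ring)
      rw [h2, ← hwi] at h
      linear_combination h
    set q : ℝ := ∑ r, N i r * x r with hqdef
    set D : ℝ := 1 - q - eps m l b0 b i * w i with hDdef
    have hviD : v i * D = w i := by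
      rw [hDdef, hqdef]
      linear_combination hvi_eq
    have hDpos : 0 < D := by nlinarith [hvipos, hwipos, hviD]
    constructor
    · rw [hpay]
      congr 1
      rw [eq_div_iff (ne_of_gt hDpos)]
      linarith [hviD]
    · exact hDpos
  -- the filter of firms in category ℓ
  set F := Finset.univ.filter (fun j => cat j = ℓ) with hFdef
  have hiF : i ∈ F := by rw [hFdef]; simp [hiℓ]
  have hFsum : ∑ j ∈ F, abar i j = b i ℓ := (habar i).2 ℓ
  have habar_ii_le : abar i i ≤ b i ℓ := by
    rw [← hFsum]
    exact Finset.single_le_sum (fun j _ => (habar i).1 j) hiF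
  have herase_sum : ∑ j ∈ F.erase i, abar i j = b i ℓ - abar i i := by
    have := Finset.add_sum_erase F (abar i) hiF
    linarith
  -- main claim : abar i i = b i ℓ
  have hmain : abar i i = b i ℓ := by
    by_contra hne
    have hlt : abar i i < b i ℓ := lt_of_le_of_ne habar_ii_le hne
    -- the deviation
    set x : Fin m → ℝ := fun j => if cat j = ℓ then (if j = i then b i ℓ else 0)
      else abar i j with hxdef
    have hxS : x ∈ Strat m l cat b i := by
      constructor
      · intro j
        rw [hxdef]
        simp only
        split
        · split
          · exact hb i ℓ
          · exact le_refl 0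
        · exact (habar i).1 j
      · intro ℓ'
        by_cases hl : ℓ' = ℓ
        · rw [hl]
          have h1 : ∀ j ∈ F, x j = (if j = i then b i ℓ else 0) := by
            intro j hj
            have := (Finset.mem_filter.1 hj).2
            rw [hxdef]
            simp only
            rw [if_pos this]
          rw [← hFdef, Finset.sum_congr rfl h1, Finset.sum_ite_eq' F i fun _ => b i ℓ,
            if_pos hiF]
        · have h1 : ∀ j ∈ Finset.univ.filter (fun j => cat j = ℓ'), x j = abar i j := by
            intro j hj
            have h2 := (Finset.mem_filter.1 hj).2
            rw [hxdef]
            simp only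
            rw [if_neg (by rw [h2]; exact fun hcon => hl hcon)]
          rw [Finset.sum_congr rfl h1]
          exact (habar i).2 ℓ'
    have hxi : x i = b i ℓ := by rw [hxdef]; simp [hiℓ]
    -- compare the demands
    have hqdiff : (∑ r, N i r * x r) - (∑ r, N i r * abar i r)
        = (b i ℓ - abar i i) - ∑ j ∈ F.erase i, N i j * abar i j := by
      have h1 : (∑ r, N i r * x r) - (∑ r, N i r * abar i r)
          = ∑ r, N i r * (x r - abar i r) := by
        rw [← Finset.sum_sub_distrib]
        exact Finset.sum_congr rfl (fun r _ => by ring)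
      have h2 : ∑ r, N i r * (x r - abar i r)
          = ∑ r ∈ F, N i r * (x r - abar i r)
            + ∑ r ∈ Finset.univ.filter (fun r => ¬ cat r = ℓ), N i r * (x r - abar i r) := by
        rw [hFdef, Finset.sum_filter_add_sum_filter_not]
      have h3 : ∑ r ∈ Finset.univ.filter (fun r => ¬ cat r = ℓ), N i r * (x r - abar i r)
          = 0 := by
        apply Finset.sum_eq_zero
        intro r hr
        have hcr : ¬ cat r = ℓ := by simpa using (Finset.mem_filter.1 hr).2
        have : x r = abar i r := by rw [hxdef]; simp only; rw [if_neg hcr]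
        rw [this]; ring
      have h4 : ∑ r ∈ F, N i r * (x r - abar i r)
          = N i i * (x i - abar i i) + ∑ r ∈ F.erase i, N i r * (x r - abar i r) :=
        (Finset.add_sum_erase F _ hiF).symm
      have h5 : ∑ r ∈ F.erase i, N i r * (x r - abar i r)
          = - ∑ r ∈ F.erase i, N i r * abar i r := by
        rw [← Finset.sum_neg_distrib]
        refine Finset.sum_congr rfl (fun r hr => ?_)
        obtain ⟨hri, hrF⟩ := Finset.mem_erase.1 hr
        have hcr : cat r = ℓ := (Finset.mem_filter.1 hrF).2
        have : x r = 0 := by rw [hxdef]; simp only; rw [if_pos hcr, if_neg hri]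
        rw [this]; ring
      rw [h1, h2, h3, add_zero, h4, h5, hNii, hxi]
      ring
    have hstrict : ∑ j ∈ F.erase i, N i j * abar i j < b i ℓ - abar i i := by
      rw [← herase_sum]
      apply Finset.sum_lt_sum
      · intro j hj
        have hji := (Finset.mem_erase.1 hj).1
        exact mul_le_of_le_one_left ((habar i).1 j) (hNlt j hji).le
      · have hpos : 0 < ∑ j ∈ F.erase i, abar i j := by rw [herase_sum]; linarith
        by_contra hno
        push_neg at hno
        have h1 : ∀ j ∈ F.erase i, abar i j ≤ N i j * abar i j := hno
        have h2 : ∀ j ∈ F.erase i, abar i j = 0 := by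
          intro j hj
          have hji := (Finset.mem_erase.1 hj).1
          have h3 := h1 j hj
          have h4 := hNlt j hji
          have h5 := (habar i).1 j
          nlinarith
        have : ∑ j ∈ F.erase i, abar i j = 0 := Finset.sum_eq_zero h2
        linarith
    have hqgt : (∑ r, N i r * abar i r) < ∑ r, N i r * x r := by linarith
    -- payoff comparison
    obtain ⟨hpx, hDx⟩ := key x hxS
    obtain ⟨hp0, hD0⟩ := key (abar i) (habar i)
    rw [Function.update_eq_self] at hp0
    have hεpos := heps i
    have hfrac : w i / (1 - (∑ r, N i r * abar i r) - eps m l b0 b i * w i)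
        < w i / (1 - (∑ r, N i r * x r) - eps m l b0 b i * w i) := by
      apply div_lt_div_of_pos_left hwipos hDx
      linarith
    have hcontra := hnash i x hxS
    rw [hpx, hp0] at hcontra
    have : eps m l b0 b i * (w i / (1 - (∑ r, N i r * abar i r) - eps m l b0 b i * w i))
        < eps m l b0 b i * (w i / (1 - (∑ r, N i r * x r) - eps m l b0 b i * w i)) :=
      mul_lt_mul_of_pos_left hfrac hεpos
    linarith
  refine ⟨hmain, ?_⟩
  -- the remaining entries of category ℓ vanish
  intro j hji hjℓ
  have hzero : ∑ r ∈ F.erase i, abar i r = 0 := by rw [herase_sum, hmain]; ring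
  have hall := (Finset.sum_eq_zero_iff_of_nonneg
    (fun r _ => (habar i).1 r)).1 hzero
  exact hall j (Finset.mem_erase.2 ⟨hji, by rw [hFdef]; simp [hjℓ]⟩)

end
end

section
/- With the additive disruption function φ = φ^sum and risk increasing with distance (r_{i,j} = r(|c(i) − c(j)| + 1)/n for all i,j and some r ∈ [0,1]), the maximum (resp. minimum) expected social welfare among 𝒬-clustered networks is achieved at the islands (resp. fully connected) economy: for every partition 𝒬 of {1,…,n}, Ŵ(A^{I}) ≥ Ŵ(A^𝒬) ≥ Ŵ(A^{F}), where A^I corresponds to the partition into singletons and A^F to the single-cluster partition. -/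
/-!
Replicate economy with n countries and L categories; firms = `Fin L × Fin n`
(category, country); partitions of the countries are `Setoid (Fin n)`;
`AQ B Q` is the 𝒬-clustered network A^𝒬 (fully connected A^F = `AQ B ⊤`,
islands A^I = `AQ B ⊥`). Each link (i,j) is disrupted independently with
probability r i j; under Hicks-neutral productivity the expected social
welfare of a network A is
Ŵ(A) = Σ_{K ⊆ M×M} [Π_{(i,j)∉K}(1 − r_{i,j}) Π_{(i,j)∈K} r_{i,j}]
        (a_0^n ⋅ (I − A)⁻¹ u_K),
with (u_K)_i = φ_i(K,A) log(1 − ρ) + b_{ℓ(i),0} log b_{ℓ(i),0}, where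
`phiSum` is the additive disruption function φ^sum.

STATEMENT 18: with φ = φ^sum and risk increasing with distance
(r_{i,j} = r(|c(i) − c(j)| + 1)/n, r ∈ [0,1]), for every partition 𝒬:
Ŵ(A^I) ≥ Ŵ(A^𝒬) ≥ Ŵ(A^F).
-/

noncomputable section

open Matrix Finset

attribute [local instance] Classical.propDecidable

/-- Firms: (category, country). -/
abbrev Firm (L n : ℕ) := Fin L × Fin n

/-- Cardinality of the cluster (equivalence class) of country `c`. -/
def clusterCard {n : ℕ} (Q : Setoid (Fin n)) (c : Fin n) : ℕ :=
  (univ.filter fun c' => Q.r c c').card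

/-- The 𝒬-clustered production network A^𝒬. -/
def AQ {L n : ℕ} (B : Fin L → Fin L → ℝ) (Q : Setoid (Fin n)) :
    Matrix (Firm L n) (Firm L n) ℝ :=
  Matrix.of fun i j =>
    if i.1 = j.1 then (if i = j then B i.1 i.1 else 0)
    else if Q.r i.2 j.2 then B i.1 j.1 / (clusterCard Q i.2 : ℝ) else 0

/-- Household consumption shares on firms: a0 ℓ / n. -/
def a0n {L : ℕ} (n : ℕ) (a0 : Fin L → ℝ) : Firm L n → ℝ :=
  fun i => a0 i.1 / n

/-- Min-disruption function φ^min: for each category, the smallest disrupted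
positive input share (0 if no such link). -/
def phiMin {L n : ℕ} (A : Matrix (Firm L n) (Firm L n) ℝ)
    (K : Finset (Firm L n × Firm L n)) (i : Firm L n) : ℝ :=
  ∑ ℓ : Fin L,
    (if h : (univ.filter fun j : Firm L n =>
        j.1 = ℓ ∧ (i, j) ∈ K ∧ 0 < A i j).Nonempty
     then (univ.filter fun j : Firm L n =>
        j.1 = ℓ ∧ (i, j) ∈ K ∧ 0 < A i j).inf' h (fun j => A i j)
     else 0)

/-- Additive disruption function φ^sum. -/
def phiSum {L n : ℕ} (A : Matrix (Firm L n) (Firm L n) ℝ)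
    (K : Finset (Firm L n × Firm L n)) (i : Firm L n) : ℝ :=
  ∑ j ∈ univ.filter (fun j : Firm L n => (i, j) ∈ K ∧ 0 < A i j), A i j

/-- Disrupted entropy-corrected productivity vector u_K. -/
def uK {L n : ℕ} (b0 : Fin L → ℝ) (ρ : ℝ)
    (φ : Matrix (Firm L n) (Firm L n) ℝ → Finset (Firm L n × Firm L n) → Firm L n → ℝ)
    (A : Matrix (Firm L n) (Firm L n) ℝ) (K : Finset (Firm L n × Firm L n)) :
    Firm L n → ℝ :=
  fun i => φ A K i * Real.log (1 - ρ) + b0 i.1 * Real.log (b0 i.1)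

/-- Expected social welfare Ŵ(A). -/
def What {L n : ℕ} (a0 b0 : Fin L → ℝ) (ρ : ℝ) (r : Firm L n → Firm L n → ℝ)
    (φ : Matrix (Firm L n) (Firm L n) ℝ → Finset (Firm L n × Firm L n) → Firm L n → ℝ)
    (A : Matrix (Firm L n) (Firm L n) ℝ) : ℝ :=
  ∑ K : Finset (Firm L n × Firm L n),
    ((∏ p ∈ Kᶜ, (1 - r p.1 p.2)) * ∏ p ∈ K, r p.1 p.2) *
      (a0n n a0 ⬝ᵥ ((1 - A)⁻¹.mulVec (uK b0 ρ φ A K)))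

namespace SDAux

section general


variable {α : Type*} [Fintype α] [DecidableEq α]

lemma sum_w_mul (f g : α → ℝ) :
    ∑ K : Finset α, (∏ p ∈ Kᶜ, g p) * ∏ p ∈ K, f p = ∏ p, (f p + g p) := by
  rw [Fintype.prod_add]
  exact Finset.sum_congr rfl fun K _ => mul_comm _ _

lemma sum_w_one (r : α → ℝ) :
    ∑ K : Finset α, (∏ p ∈ Kᶜ, (1 - r p)) * ∏ p ∈ K, r p = 1 := by
  rw [sum_w_mul]; simp

lemma sum_w_notmem (r : α → ℝ) (q : α) :
    ∑ K : Finset α, ((∏ p ∈ Kᶜ, (1 - r p)) * ∏ p ∈ K, r p) * (if q ∈ K then 0 else 1)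
      = 1 - r q := by
  have h : ∀ K : Finset α,
      ((∏ p ∈ Kᶜ, (1 - r p)) * ∏ p ∈ K, r p) * (if q ∈ K then 0 else 1)
        = (∏ p ∈ Kᶜ, (1 - r p)) * ∏ p ∈ K, (if p = q then 0 else r p) := by
    intro K
    by_cases hq : q ∈ K
    · rw [if_pos hq, mul_zero, Finset.prod_eq_zero hq (by simp), mul_zero]
    · rw [if_neg hq, mul_one]
      congr 1
      exact (Finset.prod_congr rfl fun p hp => by
        rw [if_neg]; rintro rfl; exact hq hp).symm
  rw [Finset.sum_congr rfl fun K _ => h K, sum_w_mul]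
  rw [Finset.prod_eq_single q (fun b _ hb => by rw [if_neg hb]; ring) (by simp)]
  simp

lemma sum_w_mem (r : α → ℝ) (q : α) :
    ∑ K : Finset α, ((∏ p ∈ Kᶜ, (1 - r p)) * ∏ p ∈ K, r p) * (if q ∈ K then 1 else 0)
      = r q := by
  have h := sum_w_one r
  have h2 := sum_w_notmem r q
  have h3 : ∀ K : Finset α,
      ((∏ p ∈ Kᶜ, (1 - r p)) * ∏ p ∈ K, r p) * (if q ∈ K then 1 else 0)
        = (∏ p ∈ Kᶜ, (1 - r p)) * ∏ p ∈ K, r p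
          - ((∏ p ∈ Kᶜ, (1 - r p)) * ∏ p ∈ K, r p) * (if q ∈ K then 0 else 1) := by
    intro K; by_cases hq : q ∈ K <;> simp [hq]
  rw [Finset.sum_congr rfl fun K _ => h3 K, Finset.sum_sub_distrib, h, h2]
  ring

lemma expectation (r : α → ℝ) (c : ℝ) (h : α → ℝ) :
    ∑ K : Finset α, ((∏ p ∈ Kᶜ, (1 - r p)) * ∏ p ∈ K, r p) * (c + ∑ p ∈ K, h p)
      = c + ∑ p, r p * h p := by
  have key : ∀ K : Finset α,
      ((∏ p ∈ Kᶜ, (1 - r p)) * ∏ p ∈ K, r p) * (c + ∑ p ∈ K, h p)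
        = ((∏ p ∈ Kᶜ, (1 - r p)) * ∏ p ∈ K, r p) * c
          + ∑ p, ((∏ p ∈ Kᶜ, (1 - r p)) * ∏ p ∈ K, r p) * (if p ∈ K then 1 else 0) * h p := by
    intro K
    have : ∑ p ∈ K, h p = ∑ p : α, (if p ∈ K then 1 else 0) * h p := by
      simp only [ite_mul, one_mul, zero_mul]
      rw [← Finset.sum_filter]
      simp [Finset.filter_mem_eq_inter]
    rw [this, mul_add, Finset.mul_sum]
    congr 1
    exact Finset.sum_congr rfl fun p _ => by ring
  rw [Finset.sum_congr rfl fun K _ => key K, Finset.sum_add_distrib]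
  rw [← Finset.sum_mul, sum_w_one, one_mul]
  congr 1
  rw [Finset.sum_comm]
  exact Finset.sum_congr rfl fun p _ => by
    rw [← Finset.sum_mul, sum_w_mem]



variable {α : Type*} [Fintype α] [DecidableEq α]

lemma det_one_sub_ne_zero [Nonempty α] (A : Matrix α α ℝ) (h0 : ∀ i j, 0 ≤ A i j)
    (h1 : ∀ i, ∑ j, A i j < 1) : (1 - A).det ≠ 0 := by
  intro hdet
  obtain ⟨v, hv0, hv⟩ := (Matrix.exists_mulVec_eq_zero_iff).2 hdet
  obtain ⟨i0, -, hmax⟩ := Finset.exists_max_image Finset.univ (fun i => |v i|)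
    ⟨Classical.arbitrary α, Finset.mem_univ _⟩
  have hvi : v i0 = ∑ j, A i0 j * v j := by
    have h := congrFun hv i0
    rw [Matrix.sub_mulVec] at h
    simp only [Pi.sub_apply, Matrix.one_mulVec, Matrix.mulVec, dotProduct,
      Pi.zero_apply] at h
    linarith
  have hpos : 0 < |v i0| := by
    have h := Function.ne_iff.1 hv0
    obtain ⟨k, hk⟩ := h
    exact lt_of_lt_of_le (abs_pos.2 hk) (hmax k (Finset.mem_univ k))
  have hle : |v i0| ≤ (∑ j, A i0 j) * |v i0| := by
    calc |v i0| = |∑ j, A i0 j * v j| := by rw [← hvi]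
      _ ≤ ∑ j, |A i0 j * v j| := Finset.abs_sum_le_sum_abs _ _
      _ ≤ ∑ j, A i0 j * |v i0| := Finset.sum_le_sum fun j _ => by
            rw [abs_mul, abs_of_nonneg (h0 i0 j)]
            exact mul_le_mul_of_nonneg_left (hmax j (Finset.mem_univ j)) (h0 i0 j)
      _ = (∑ j, A i0 j) * |v i0| := (Finset.sum_mul _ _ _).symm
  nlinarith [h1 i0]

lemma vecMul_inv (A : Matrix α α ℝ) (hdet : (1 - A).det ≠ 0) (w a : α → ℝ)
    (hw : w ᵥ* (1 - A) = a) : a ᵥ* (1 - A)⁻¹ = w := by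
  rw [← hw, Matrix.vecMul_vecMul, Matrix.mul_nonsing_inv _ (isUnit_iff_ne_zero.2 hdet),
    Matrix.vecMul_one]

lemma pow_entry_nonneg (B : Matrix α α ℝ) (hB : ∀ i j, 0 ≤ B i j) (k : ℕ) :
    ∀ i j, 0 ≤ (B ^ k) i j := by
  induction k with
  | zero => intro i j; rw [pow_zero, Matrix.one_apply]; split <;> norm_num
  | succ k ih =>
      intro i j
      rw [pow_succ, Matrix.mul_apply]
      exact Finset.sum_nonneg fun l _ => mul_nonneg (ih i l) (hB l j)

lemma pow_row_sum_le (B : Matrix α α ℝ) (hB : ∀ i j, 0 ≤ B i j) (c : ℝ) (hc0 : 0 ≤ c)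
    (hrow : ∀ i, ∑ j, B i j ≤ c) (k : ℕ) : ∀ i, ∑ j, (B ^ k) i j ≤ c ^ k := by
  induction k with
  | zero => intro i; simp [Matrix.one_apply]
  | succ k ih =>
      intro i
      have heq : ∑ j, (B ^ (k+1)) i j = ∑ l, B i l * ∑ j, (B ^ k) l j := by
        rw [pow_succ']
        simp only [Matrix.mul_apply]
        rw [Finset.sum_comm]
        exact Finset.sum_congr rfl fun l _ => (Finset.mul_sum _ _ _).symm
      rw [heq]
      calc ∑ l, B i l * ∑ j, (B ^ k) l j ≤ ∑ l, B i l * c ^ k :=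
            Finset.sum_le_sum fun l _ => mul_le_mul_of_nonneg_left (ih l) (hB i l)
        _ = (∑ l, B i l) * c ^ k := (Finset.sum_mul _ _ _).symm
        _ ≤ c * c ^ k := mul_le_mul_of_nonneg_right (hrow i) (pow_nonneg hc0 k)
        _ = c ^ (k+1) := (pow_succ' c k).symm

lemma solution_nonneg (B : Matrix α α ℝ) (a W : α → ℝ) (hB : ∀ i j, 0 ≤ B i j)
    (c : ℝ) (hc0 : 0 ≤ c) (hc1 : c < 1) (hrow : ∀ i, ∑ j, B i j ≤ c)
    (ha : ∀ i, 0 ≤ a i) (hW : ∀ i, W i = a i + (Bᵀ *ᵥ W) i) : ∀ i, 0 ≤ W i := by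
  have hWa : Bᵀ *ᵥ W = W - a := by
    funext j
    have := hW j
    simp only [Pi.sub_apply]
    linarith
  have key : ∀ k : ℕ, ∀ i, ((Bᵀ) ^ k *ᵥ W) i ≤ W i := by
    intro k
    induction k with
    | zero => intro i; rw [pow_zero, Matrix.one_mulVec]
    | succ k ih =>
        intro i
        have h1 : (Bᵀ) ^ (k+1) *ᵥ W = (Bᵀ) ^ k *ᵥ (Bᵀ *ᵥ W) := by
          rw [Matrix.mulVec_mulVec, ← pow_succ]
        have h3 : 0 ≤ ((Bᵀ) ^ k *ᵥ a) i := by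
          have : ((Bᵀ) ^ k *ᵥ a) i = ∑ j, ((Bᵀ) ^ k) i j * a j := rfl
          rw [this]
          refine Finset.sum_nonneg fun j _ => mul_nonneg ?_ (ha j)
          rw [← Matrix.transpose_pow]
          exact pow_entry_nonneg B hB k j i
        have h4 := ih i
        rw [h1, hWa, Matrix.mulVec_sub]
        simp only [Pi.sub_apply]
        linarith
  intro i
  by_contra hneg
  push_neg at hneg
  set S := ∑ j, |W j| with hS
  have hS0 : 0 ≤ S := Finset.sum_nonneg fun j _ => abs_nonneg _
  have hx : 0 < -W i / (S + 1) := div_pos (by linarith) (by linarith)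
  obtain ⟨k, hk⟩ := exists_pow_lt_of_lt_one hx hc1
  have hlow : -(c ^ k * S) ≤ ((Bᵀ) ^ k *ᵥ W) i := by
    have hrep : ((Bᵀ) ^ k *ᵥ W) i = ∑ j, (B ^ k) j i * W j := by
      have : ((Bᵀ) ^ k *ᵥ W) i = ∑ j, ((Bᵀ) ^ k) i j * W j := rfl
      rw [this]
      exact Finset.sum_congr rfl fun j _ => by rw [← Matrix.transpose_pow]; rfl
    rw [hrep, hS, Finset.mul_sum, ← Finset.sum_neg_distrib]
    refine Finset.sum_le_sum fun j _ => ?_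
    have hent : (B ^ k) j i ≤ c ^ k := by
      calc (B ^ k) j i ≤ ∑ j', (B ^ k) j j' :=
            Finset.single_le_sum (fun j' _ => pow_entry_nonneg B hB k j j') (Finset.mem_univ i)
        _ ≤ c ^ k := pow_row_sum_le B hB c hc0 hrow k j
    have hent0 : 0 ≤ (B ^ k) j i := pow_entry_nonneg B hB k j i
    have habs : |(B ^ k) j i * W j| ≤ c ^ k * |W j| := by
      rw [abs_mul, abs_of_nonneg hent0]
      exact mul_le_mul_of_nonneg_right hent (abs_nonneg _)
    have := neg_abs_le ((B ^ k) j i * W j)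
    linarith
  have hkey := key k i
  have hfin : c ^ k * S < -W i := by
    calc c ^ k * S ≤ c ^ k * (S + 1) := by nlinarith [pow_nonneg hc0 k]
      _ < (-W i / (S + 1)) * (S + 1) := by
          apply mul_lt_mul_of_pos_right hk; linarith
      _ = -W i := by field_simp
  linarith


end general


variable {L n : ℕ}

lemma clusterCard_pos (Q : Setoid (Fin n)) (c : Fin n) : 0 < clusterCard Q c :=
  Finset.card_pos.2 ⟨c, by simp [clusterCard]⟩

lemma filter_rel_congr (Q : Setoid (Fin n)) {a b : Fin n} (h : Q.r a b) :
    (univ.filter fun c' => Q.r a c') = (univ.filter fun c' => Q.r b c') := by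
  ext c
  simp only [Finset.mem_filter, Finset.mem_univ, true_and]
  exact ⟨fun h' => Q.trans' (Q.symm' h) h', fun h' => Q.trans' h h'⟩

lemma clusterCard_congr (Q : Setoid (Fin n)) {a b : Fin n} (h : Q.r a b) :
    clusterCard Q a = clusterCard Q b := by
  unfold clusterCard; rw [filter_rel_congr Q h]

lemma filter_rel_symm (Q : Setoid (Fin n)) (c : Fin n) :
    (univ.filter fun c' => Q.r c' c) = (univ.filter fun c' => Q.r c c') := by
  ext a
  simp only [Finset.mem_filter, Finset.mem_univ, true_and]
  exact ⟨fun h' => Q.symm' h', fun h' => Q.symm' h'⟩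

lemma AQ_nonneg (B : Fin L → Fin L → ℝ) (hB : ∀ l l', 0 ≤ B l l') (Q : Setoid (Fin n))
    (i j : Firm L n) : 0 ≤ AQ B Q i j := by
  unfold AQ
  simp only [Matrix.of_apply]
  split_ifs
  · exact hB _ _
  · exact le_refl 0
  · exact div_nonneg (hB _ _) (Nat.cast_nonneg _)
  · exact le_refl 0

def dd {n : ℕ} (c c' : Fin n) : ℝ := |(c.val : ℝ) - (c'.val : ℝ)|

def GG {n : ℕ} (Q : Setoid (Fin n)) (c : Fin n) : ℝ :=
  (∑ c' ∈ univ.filter (fun c' => Q.r c c'), (dd c c' + 1)) / (clusterCard Q c : ℝ)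

lemma AQ_colsum (B : Fin L → Fin L → ℝ) (Q : Setoid (Fin n)) (W : Fin L → ℝ)
    (j : Firm L n) :
    ∑ i : Firm L n, (W i.1 / n) * AQ B Q i j = (∑ ℓ, W ℓ * B ℓ j.1) / n := by
  rw [Fintype.sum_prod_type]
  have inner : ∀ ℓ : Fin L, ∑ c : Fin n, (W ℓ / n) * AQ B Q (ℓ, c) j
      = W ℓ * B ℓ j.1 / n := by
    intro ℓ
    by_cases hℓ : ℓ = j.1
    · subst hℓ
      have key : ∀ c : Fin n, (W j.1 / n) * AQ B Q (j.1, c) j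
          = if c = j.2 then W j.1 * B j.1 j.1 / n else 0 := by
        intro c
        unfold AQ
        simp only [Matrix.of_apply]
        rw [if_pos trivial]
        by_cases hc : c = j.2
        · subst hc
          rw [if_pos rfl, if_pos]
          · ring
          · exact rfl
        · rw [if_neg, if_neg hc, mul_zero]
          intro hcon
          exact hc (congrArg Prod.snd hcon)
      rw [Finset.sum_congr rfl fun c _ => key c]
      simp
    · have key : ∀ c : Fin n, (W ℓ / n) * AQ B Q (ℓ, c) j
          = if Q.r c j.2 then (W ℓ * B ℓ j.1 / n) / (clusterCard Q j.2 : ℝ) else 0 := by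
        intro c
        unfold AQ
        simp only [Matrix.of_apply]
        rw [if_neg hℓ]
        by_cases hc : Q.r c j.2
        · rw [if_pos hc, if_pos hc, clusterCard_congr Q hc, div_mul_div_comm, div_div]
        · rw [if_neg hc, if_neg hc, mul_zero]
      rw [Finset.sum_congr rfl fun c _ => key c, ← Finset.sum_filter,
        Finset.sum_const, filter_rel_symm Q j.2, nsmul_eq_mul]
      have hm : ((clusterCard Q j.2 : ℝ)) ≠ 0 := by
        exact_mod_cast (clusterCard_pos Q j.2).ne'
      have hcc : ((univ.filter fun c' => Q.r j.2 c').card : ℝ) = (clusterCard Q j.2 : ℝ) := rfl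
      rw [hcc, mul_comm, div_mul_cancel₀ _ hm]
  rw [Finset.sum_congr rfl fun ℓ _ => inner ℓ, ← Finset.sum_div]

lemma AQ_rowsum_dist (B : Fin L → Fin L → ℝ) (Q : Setoid (Fin n)) (i : Firm L n) :
    ∑ j : Firm L n, (dd i.2 j.2 + 1) * AQ B Q i j
      = B i.1 i.1 + (∑ ℓ' ∈ univ.filter (fun ℓ' => ¬ℓ' = i.1), B i.1 ℓ') * GG Q i.2 := by
  rw [Fintype.sum_prod_type]
  have inner : ∀ ℓ' : Fin L, ∑ c' : Fin n, (dd i.2 c' + 1) * AQ B Q i (ℓ', c')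
      = if ℓ' = i.1 then B i.1 i.1 else B i.1 ℓ' * GG Q i.2 := by
    intro ℓ'
    by_cases hℓ : ℓ' = i.1
    · subst hℓ
      rw [if_pos rfl]
      have key : ∀ c' : Fin n, (dd i.2 c' + 1) * AQ B Q i (i.1, c')
          = if c' = i.2 then B i.1 i.1 else 0 := by
        intro c'
        unfold AQ
        simp only [Matrix.of_apply]
        rw [if_pos trivial]
        by_cases hc : c' = i.2
        · subst hc
          rw [if_pos rfl, if_pos]
          · unfold dd; simp
          · exact rfl
        · rw [if_neg, mul_zero, if_neg hc]
          intro hcon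
          exact hc (congrArg Prod.snd hcon).symm
      rw [Finset.sum_congr rfl fun c _ => key c]
      simp
    · rw [if_neg hℓ]
      have key : ∀ c' : Fin n, (dd i.2 c' + 1) * AQ B Q i (ℓ', c')
          = if Q.r i.2 c' then (dd i.2 c' + 1) * (B i.1 ℓ' / (clusterCard Q i.2 : ℝ))
            else 0 := by
        intro c'
        unfold AQ
        simp only [Matrix.of_apply]
        rw [if_neg (fun hcon => hℓ hcon.symm)]
        by_cases hc : Q.r i.2 c'
        · rw [if_pos hc, if_pos hc]
        · rw [if_neg hc, if_neg hc, mul_zero]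
      rw [Finset.sum_congr rfl fun c _ => key c, ← Finset.sum_filter]
      unfold GG
      rw [Finset.sum_div, Finset.mul_sum]
      refine Finset.sum_congr rfl fun c' hc' => ?_
      ring
  rw [Finset.sum_congr rfl fun ℓ _ => inner ℓ, Finset.sum_ite,
    Finset.filter_eq', if_pos (Finset.mem_univ _), Finset.sum_singleton]
  rw [Finset.sum_mul]

lemma AQ_rowsum (B : Fin L → Fin L → ℝ) (Q : Setoid (Fin n)) (i : Firm L n) :
    ∑ j : Firm L n, AQ B Q i j = ∑ ℓ', B i.1 ℓ' := by
  rw [Fintype.sum_prod_type]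
  have inner : ∀ ℓ' : Fin L, ∑ c' : Fin n, AQ B Q i (ℓ', c')
      = if ℓ' = i.1 then B i.1 i.1 else B i.1 ℓ' := by
    intro ℓ'
    by_cases hℓ : ℓ' = i.1
    · subst hℓ
      rw [if_pos rfl]
      have key : ∀ c' : Fin n, AQ B Q i (i.1, c')
          = if c' = i.2 then B i.1 i.1 else 0 := by
        intro c'
        unfold AQ
        simp only [Matrix.of_apply]
        rw [if_pos trivial]
        by_cases hc : c' = i.2
        · subst hc
          rw [if_pos rfl, if_pos]
          exact rfl
        · rw [if_neg, if_neg hc]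
          intro hcon
          exact hc (congrArg Prod.snd hcon).symm
      rw [Finset.sum_congr rfl fun c _ => key c]
      simp
    · rw [if_neg hℓ]
      have key : ∀ c' : Fin n, AQ B Q i (ℓ', c')
          = if Q.r i.2 c' then B i.1 ℓ' / (clusterCard Q i.2 : ℝ) else 0 := by
        intro c'
        unfold AQ
        simp only [Matrix.of_apply]
        rw [if_neg (fun hcon => hℓ hcon.symm)]
      rw [Finset.sum_congr rfl fun c _ => key c, ← Finset.sum_filter, Finset.sum_const,
        nsmul_eq_mul]
      have hm : ((clusterCard Q i.2 : ℝ)) ≠ 0 := by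
        exact_mod_cast (clusterCard_pos Q i.2).ne'
      have hcc : ((univ.filter fun c' => Q.r i.2 c').card : ℝ) = (clusterCard Q i.2 : ℝ) := rfl
      rw [hcc, mul_comm, div_mul_cancel₀ _ hm]
  rw [Finset.sum_congr rfl fun ℓ _ => inner ℓ]
  refine Finset.sum_congr rfl fun ℓ' _ => ?_
  by_cases hℓ : ℓ' = i.1
  · subst hℓ; rw [if_pos rfl]
  · rw [if_neg hℓ]


lemma xt_aux {n : ℕ} (c : Fin n) :
    ∑ t ∈ Finset.range n, (if t < c.val then (1:ℝ) else 0) = c.val := by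
  rw [Finset.sum_boole]
  have hfil : (Finset.range n).filter (fun t => t < c.val) = Finset.range c.val := by
    ext t
    simp only [Finset.mem_filter, Finset.mem_range]
    exact ⟨fun h => h.2, fun h => ⟨lt_of_lt_of_le h (le_of_lt c.isLt), h⟩⟩
  rw [hfil, Finset.card_range]

lemma dd_thresh {n : ℕ} (c c' : Fin n) :
    dd c c' = ∑ t ∈ Finset.range n,
      |(if t < c.val then (1:ℝ) else 0) - (if t < c'.val then (1:ℝ) else 0)| := by
  have hmono : ∀ a b : Fin n, a.val ≤ b.val → ∀ t : ℕ,
      (if t < a.val then (1:ℝ) else 0) ≤ (if t < b.val then (1:ℝ) else 0) := by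
    intro a b hab t
    by_cases h1 : t < a.val
    · have h2 : t < b.val := lt_of_lt_of_le h1 hab
      rw [if_pos h1, if_pos h2]
    · rw [if_neg h1]
      split_ifs <;> norm_num
  have main : ∀ a b : Fin n, a.val ≤ b.val → dd a b = ∑ t ∈ Finset.range n,
      |(if t < a.val then (1:ℝ) else 0) - (if t < b.val then (1:ℝ) else 0)| := by
    intro a b hab
    have heq : ∀ t ∈ Finset.range n,
        |(if t < a.val then (1:ℝ) else 0) - (if t < b.val then (1:ℝ) else 0)|
          = (if t < b.val then (1:ℝ) else 0) - (if t < a.val then (1:ℝ) else 0) := by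
      intro t _
      rw [abs_sub_comm, abs_of_nonneg (sub_nonneg.2 (hmono a b hab t))]
    rw [Finset.sum_congr rfl heq, Finset.sum_sub_distrib, xt_aux, xt_aux]
    unfold dd
    rw [abs_sub_comm, abs_of_nonneg (sub_nonneg.2 (by exact_mod_cast hab))]
  rcases le_total c.val c'.val with h | h
  · exact main c c' h
  · have h1 := main c' c h
    have h2 : dd c c' = dd c' c := by unfold dd; rw [abs_sub_comm]
    rw [h2, h1]
    exact Finset.sum_congr rfl fun t _ => by rw [abs_sub_comm]

lemma V_le {n : ℕ} (hn : 0 < n) (Q : Setoid (Fin n)) (x : Fin n → ℝ)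
    (hx : ∀ c, x c = 0 ∨ x c = 1) :
    ∑ c, (∑ c' ∈ univ.filter (fun c' => Q.r c c'), |x c - x c'|) / (clusterCard Q c : ℝ)
      ≤ ∑ c : Fin n, (∑ c' : Fin n, |x c - x c'|) / (n : ℝ) := by
  have hn' : (0:ℝ) < n := by exact_mod_cast hn
  set m : Fin n → ℝ := fun c => (clusterCard Q c : ℝ) with hm
  set p : Fin n → ℝ := fun c => ∑ c' ∈ univ.filter (fun c' => Q.r c c'), x c' with hp
  set P : ℝ := ∑ c, x c with hP
  have hm0 : ∀ c, 0 < m c := fun c => by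
    show (0:ℝ) < (clusterCard Q c : ℝ)
    exact_mod_cast clusterCard_pos Q c
  have hx0 : ∀ c, 0 ≤ x c := fun c => by rcases hx c with h|h <;> rw [h] <;> norm_num
  have hx1 : ∀ c, x c ≤ 1 := fun c => by rcases hx c with h|h <;> rw [h] <;> norm_num
  have hp0 : ∀ c, 0 ≤ p c := fun c => Finset.sum_nonneg fun _ _ => hx0 _
  have hpcongr : ∀ a b, Q.r a b → p a = p b := by
    intro a b h
    rw [hp]
    simp only []
    rw [filter_rel_congr Q h]
  have hmcongr : ∀ a b, Q.r a b → m a = m b := by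
    intro a b h
    rw [hm]
    simp only []
    rw [clusterCard_congr Q h]
  have habs : ∀ a b : Fin n, |x a - x b| = x a + x b - 2*(x a * x b) := by
    intro a b
    rcases hx a with h|h <;> rcases hx b with h'|h' <;> rw [h, h'] <;> norm_num
  -- inner sums over the cluster
  have hinner : ∀ c, ∑ c' ∈ univ.filter (fun c' => Q.r c c'), |x c - x c'|
      = x c * m c + p c - 2 * (x c * p c) := by
    intro c
    rw [Finset.sum_congr rfl (fun c' _ => habs c c'), Finset.sum_sub_distrib,
      Finset.sum_add_distrib, Finset.sum_const, nsmul_eq_mul, ← Finset.mul_sum,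
      ← Finset.mul_sum]
    rw [hp, hm]
    simp only []
    unfold clusterCard
    ring
  have hLHS : ∑ c, (∑ c' ∈ univ.filter (fun c' => Q.r c c'), |x c - x c'|) / (m c)
      = P + (∑ c, p c / m c) - 2 * ∑ c, x c * (p c / m c) := by
    have step : ∀ c : Fin n, (∑ c' ∈ univ.filter (fun c' => Q.r c c'), |x c - x c'|) / (m c)
        = x c + p c / m c - 2 * (x c * (p c / m c)) := by
      intro c
      rw [hinner c]
      field_simp [(hm0 c).ne']
    rw [Finset.sum_congr rfl fun c _ => step c, Finset.sum_sub_distrib,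
      Finset.sum_add_distrib, ← Finset.mul_sum, hP]
  -- claim A
  have claimA : ∑ c, p c / m c = P := by
    have step : ∀ c : Fin n, p c / m c
        = ∑ c' : Fin n, (if Q.r c c' then x c' / m c' else 0) := by
      intro c
      rw [← Finset.sum_filter]
      have e1 : ∀ c' ∈ univ.filter (fun c' => Q.r c c'), x c' / m c' = x c' / m c := by
        intro c' hc'
        rw [hmcongr c c' (Finset.mem_filter.1 hc').2]
      rw [Finset.sum_congr rfl e1, ← Finset.sum_div]
    rw [Finset.sum_congr rfl fun c _ => step c, Finset.sum_comm]
    have inner2 : ∀ c' : Fin n, ∑ c, (if Q.r c c' then x c' / m c' else 0) = x c' := by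
      intro c'
      rw [← Finset.sum_filter, Finset.sum_const, filter_rel_symm Q c', nsmul_eq_mul]
      have hcc : ((univ.filter fun a => Q.r c' a).card : ℝ) = m c' := rfl
      rw [hcc, mul_comm, div_mul_cancel₀ _ (hm0 c').ne']
    rw [Finset.sum_congr rfl fun c' _ => inner2 c']
  -- claim B
  have claimB : ∑ c, x c * (m c / p c) ≤ (n : ℝ) := by
    have step : ∀ c : Fin n, x c * (m c / p c)
        = ∑ c' : Fin n, (if Q.r c c' then x c / p c else 0) := by
      intro c
      rw [← Finset.sum_filter, Finset.sum_const, nsmul_eq_mul]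
      have hcc : ((univ.filter fun c' => Q.r c c').card : ℝ) = m c := rfl
      rw [hcc]
      ring
    rw [Finset.sum_congr rfl fun c _ => step c, Finset.sum_comm]
    have inner2 : ∀ c' : Fin n, ∑ c, (if Q.r c c' then x c / p c else 0) ≤ 1 := by
      intro c'
      rw [← Finset.sum_filter]
      have e1 : ∀ c ∈ univ.filter (fun c => Q.r c c'), x c / p c = x c / p c' := by
        intro c hc
        rw [hpcongr c c' (Finset.mem_filter.1 hc).2]
      rw [Finset.sum_congr rfl e1, ← Finset.sum_div]
      have e2 : ∑ c ∈ univ.filter (fun c => Q.r c c'), x c = p c' := by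
        rw [show (univ.filter fun c => Q.r c c') = (univ.filter fun c => Q.r c' c) from
          filter_rel_symm Q c']
      rw [e2]
      rcases eq_or_lt_of_le (hp0 c') with h|h
      · rw [← h]
        norm_num
      · rw [div_self h.ne']
    calc ∑ c' : Fin n, ∑ c, (if Q.r c c' then x c / p c else 0) ≤ ∑ _c' : Fin n, (1:ℝ) :=
          Finset.sum_le_sum fun c' _ => inner2 c'
      _ = n := by
          rw [Finset.sum_const, nsmul_eq_mul, Finset.card_univ, Fintype.card_fin, mul_one]
  -- Cauchy–Schwarz
  have hpc1 : ∀ c, x c = 1 → (1:ℝ) ≤ p c := by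
    intro c h
    have hmem : c ∈ univ.filter (fun c' => Q.r c c') := by
      simp only [Finset.mem_filter, Finset.mem_univ, true_and]
      exact Q.refl' c
    have := Finset.single_le_sum (f := x) (fun c' _ => hx0 c') hmem
    rw [h] at this
    exact this
  have claimCS : P * P ≤ (∑ c, x c * (p c / m c)) * (∑ c, x c * (m c / p c)) := by
    have key := Finset.sum_mul_sq_le_sq_mul_sq univ
      (fun c => Real.sqrt (x c * (p c / m c))) (fun c => Real.sqrt (x c * (m c / p c)))
    have hfg : ∀ c : Fin n, Real.sqrt (x c * (p c / m c)) * Real.sqrt (x c * (m c / p c))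
        = x c := by
      intro c
      rcases hx c with h|h
      · rw [h]
        simp
      · have hp1 : 0 < p c := lt_of_lt_of_le one_pos (hpc1 c h)
        rw [← Real.sqrt_mul (mul_nonneg (hx0 c) (div_nonneg (hp0 c) (hm0 c).le))]
        have e : (x c * (p c / m c)) * (x c * (m c / p c)) = 1 := by
          rw [h]
          field_simp
          exact div_self (hm0 c).ne'
        rw [e, Real.sqrt_one, h]
    have hf2 : ∀ c : Fin n, (Real.sqrt (x c * (p c / m c)))^2 = x c * (p c / m c) :=
      fun c => Real.sq_sqrt (mul_nonneg (hx0 c) (div_nonneg (hp0 c) (hm0 c).le))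
    have hg2 : ∀ c : Fin n, (Real.sqrt (x c * (m c / p c)))^2 = x c * (m c / p c) :=
      fun c => Real.sq_sqrt (mul_nonneg (hx0 c) (div_nonneg (hm0 c).le (hp0 c)))
    rw [Finset.sum_congr rfl fun c _ => hfg c, Finset.sum_congr rfl fun c _ => hf2 c,
      Finset.sum_congr rfl fun c _ => hg2 c] at key
    calc P * P = (∑ c, x c)^2 := by rw [hP]; ring
      _ ≤ _ := key
  have hxpm0 : 0 ≤ ∑ c, x c * (p c / m c) :=
    Finset.sum_nonneg fun c _ => mul_nonneg (hx0 c) (div_nonneg (hp0 c) (hm0 c).le)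
  have h1 : P * P ≤ (∑ c, x c * (p c / m c)) * n :=
    le_trans claimCS (mul_le_mul_of_nonneg_left claimB hxpm0)
  have h2 : P * P / n ≤ ∑ c, x c * (p c / m c) := (div_le_iff₀ hn').2 h1
  -- RHS
  have hRHSinner : ∀ c : Fin n, ∑ c' : Fin n, |x c - x c'| = x c * n + P - 2*(x c * P) := by
    intro c
    rw [Finset.sum_congr rfl fun c' _ => habs c c', Finset.sum_sub_distrib,
      Finset.sum_add_distrib, Finset.sum_const, nsmul_eq_mul, Finset.card_univ,
      Fintype.card_fin, ← Finset.mul_sum, ← Finset.mul_sum, ← hP]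
    ring
  have hRHS : ∑ c : Fin n, (∑ c' : Fin n, |x c - x c'|) / (n:ℝ) = 2*P - 2*(P*P)/n := by
    rw [Finset.sum_congr rfl fun c _ => by rw [hRHSinner c]]
    have step : ∀ c : Fin n, (x c * n + P - 2*(x c * P))/(n:ℝ)
        = x c + P/n - 2*(x c * (P/n)) := by
      intro c
      field_simp
    rw [Finset.sum_congr rfl fun c _ => step c, Finset.sum_sub_distrib,
      Finset.sum_add_distrib, ← Finset.mul_sum, ← hP, Finset.sum_const, nsmul_eq_mul,
      Finset.card_univ, Fintype.card_fin]
    rw [show ∑ c : Fin n, x c * (P/n) = (∑ c : Fin n, x c) * (P/n) from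
      (Finset.sum_mul _ _ _).symm, ← hP]
    field_simp [hn.ne']
    ring
  have final : P + (∑ c, p c / m c) - 2 * ∑ c, x c * (p c / m c) ≤ 2*P - 2*(P*P)/n := by
    rw [claimA, show (2*(P*P)/n : ℝ) = 2*(P*P/n) from by ring]
    linarith [h2]
  exact le_trans (le_of_eq hLHS) (le_trans final (le_of_eq hRHS.symm))


lemma sum_indicator {β : Type*} [Fintype β] [DecidableEq β] (K : Finset β) (h : β → ℝ) :
    ∑ p ∈ K, h p = ∑ p : β, (if p ∈ K then h p else 0) := by
  rw [← Finset.sum_filter]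
  simp [Finset.filter_mem_eq_inter]

lemma bot_rel {n : ℕ} (a b : Fin n) : (⊥ : Setoid (Fin n)).r a b ↔ a = b := Iff.rfl

lemma top_rel {n : ℕ} (a b : Fin n) : (⊤ : Setoid (Fin n)).r a b ↔ True := Iff.rfl

lemma filter_bot {n : ℕ} (c : Fin n) :
    (univ.filter fun c' => (⊥ : Setoid (Fin n)).r c c') = {c} := by
  ext a
  simp only [Finset.mem_filter, Finset.mem_univ, true_and, Finset.mem_singleton]
  rw [bot_rel]
  exact eq_comm

lemma filter_top {n : ℕ} (c : Fin n) :
    (univ.filter fun c' => (⊤ : Setoid (Fin n)).r c c') = univ := by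
  ext a
  simp only [Finset.mem_filter, Finset.mem_univ, true_and]
  rw [top_rel]

lemma clusterCard_bot {n : ℕ} (c : Fin n) : clusterCard (⊥ : Setoid (Fin n)) c = 1 := by
  unfold clusterCard
  rw [filter_bot, Finset.card_singleton]

lemma clusterCard_top {n : ℕ} (c : Fin n) : clusterCard (⊤ : Setoid (Fin n)) c = n := by
  unfold clusterCard
  rw [filter_top, Finset.card_univ, Fintype.card_fin]

lemma GG_bot {n : ℕ} (c : Fin n) : GG (⊥ : Setoid (Fin n)) c = 1 := by
  unfold GG
  rw [filter_bot, clusterCard_bot, Finset.sum_singleton]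
  unfold dd
  simp

lemma g_bot {n : ℕ} : ∑ c : Fin n, GG (⊥ : Setoid (Fin n)) c = n := by
  rw [Finset.sum_congr rfl fun c _ => GG_bot c, Finset.sum_const, nsmul_eq_mul,
    Finset.card_univ, Fintype.card_fin, mul_one]

lemma GG_ge_one {n : ℕ} (Q : Setoid (Fin n)) (c : Fin n) : 1 ≤ GG Q c := by
  unfold GG
  have hm : (0:ℝ) < (clusterCard Q c : ℝ) := by exact_mod_cast clusterCard_pos Q c
  rw [le_div_iff₀ hm, one_mul]
  calc (clusterCard Q c : ℝ) = ∑ _c' ∈ univ.filter (fun c' => Q.r c c'), (1:ℝ) := by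
        rw [Finset.sum_const, nsmul_eq_mul, mul_one]; rfl
    _ ≤ _ := Finset.sum_le_sum fun c' _ => by
        have : (0:ℝ) ≤ dd c c' := abs_nonneg _
        linarith

lemma g_ge_bot {n : ℕ} (Q : Setoid (Fin n)) :
    ∑ c : Fin n, GG (⊥ : Setoid (Fin n)) c ≤ ∑ c : Fin n, GG Q c := by
  rw [g_bot]
  calc (n : ℝ) = ∑ _c : Fin n, (1:ℝ) := by
        rw [Finset.sum_const, nsmul_eq_mul, Finset.card_univ, Fintype.card_fin, mul_one]
    _ ≤ _ := Finset.sum_le_sum fun c _ => GG_ge_one Q c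

lemma GG_split {n : ℕ} (Q : Setoid (Fin n)) (c : Fin n) :
    GG Q c = 1 + (∑ c' ∈ univ.filter (fun c' => Q.r c c'), dd c c') / (clusterCard Q c : ℝ) := by
  unfold GG
  have hm : ((clusterCard Q c : ℝ)) ≠ 0 := by
    have := clusterCard_pos Q c
    exact_mod_cast this.ne'
  rw [Finset.sum_add_distrib, Finset.sum_const, nsmul_eq_mul, mul_one, add_div,
    show ((univ.filter fun c' => Q.r c c').card : ℝ) = (clusterCard Q c : ℝ) from rfl,
    div_self hm]
  ring

lemma g_le_top {n : ℕ} (hn : 0 < n) (Q : Setoid (Fin n)) :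
    ∑ c : Fin n, GG Q c ≤ ∑ c : Fin n, GG (⊤ : Setoid (Fin n)) c := by
  rw [Finset.sum_congr rfl fun c _ => GG_split Q c,
    Finset.sum_congr rfl fun c _ => GG_split (⊤ : Setoid (Fin n)) c,
    Finset.sum_add_distrib, Finset.sum_add_distrib]
  refine add_le_add (le_refl _) ?_
  -- U Q ≤ U ⊤
  have hthresh : ∀ Q' : Setoid (Fin n), ∑ c : Fin n,
      (∑ c' ∈ univ.filter (fun c' => Q'.r c c'), dd c c') / (clusterCard Q' c : ℝ)
      = ∑ t ∈ Finset.range n, ∑ c : Fin n,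
        (∑ c' ∈ univ.filter (fun c' => Q'.r c c'),
          |(if t < c.val then (1:ℝ) else 0) - (if t < c'.val then (1:ℝ) else 0)|)
            / (clusterCard Q' c : ℝ) := by
    intro Q'
    rw [Finset.sum_comm]
    refine Finset.sum_congr rfl fun c _ => ?_
    rw [← Finset.sum_div]
    congr 1
    rw [Finset.sum_comm]
    exact Finset.sum_congr rfl fun c' _ => dd_thresh c c'
  rw [hthresh Q, hthresh (⊤ : Setoid (Fin n))]
  refine Finset.sum_le_sum fun t _ => ?_
  have hV := V_le hn Q (fun c : Fin n => if t < c.val then (1:ℝ) else 0)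
    (fun c => by
      by_cases h : t < c.val
      · right; simp [h]
      · left; simp [h])
  refine le_trans hV (le_of_eq ?_)
  refine Finset.sum_congr rfl fun c _ => ?_
  rw [filter_top, clusterCard_top]

end SDAux

theorem sum_disruption_distance_welfare_comparison
    (n L : ℕ) (hn : 1 ≤ n) (hL : 1 ≤ L)
    (a0 b0 : Fin L → ℝ) (B : Fin L → Fin L → ℝ)
    (ha0 : ∀ ℓ, 0 < a0 ℓ) (ha0sum : ∑ ℓ, a0 ℓ = 1)
    (hb0 : ∀ ℓ, 0 < b0 ℓ) (hB : ∀ ℓ ℓ', 0 ≤ B ℓ ℓ')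
    (hrow : ∀ ℓ, b0 ℓ + ∑ ℓ', B ℓ ℓ' ≤ 1)
    (ρ : ℝ) (hρ : ρ ∈ Set.Ico (0 : ℝ) 1)
    (r : Firm L n → Firm L n → ℝ)
    (hr : ∃ r0 ∈ Set.Icc (0 : ℝ) 1, ∀ i j : Firm L n,
        r i j = r0 * ((|(i.2.val : ℝ) - (j.2.val : ℝ)| + 1) / n))
    (Q : Setoid (Fin n)) :
    What a0 b0 ρ r phiSum (AQ B Q)
        ≤ What a0 b0 ρ r phiSum (AQ B (⊥ : Setoid (Fin n)))
    ∧ What a0 b0 ρ r phiSum (AQ B (⊤ : Setoid (Fin n)))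
        ≤ What a0 b0 ρ r phiSum (AQ B Q) := by
  obtain ⟨r0, hr0mem, hrdef⟩ := hr
  have hr00 : 0 ≤ r0 := hr0mem.1
  have hn0 : 0 < n := hn
  have hn' : (0:ℝ) < n := by exact_mod_cast hn
  haveI : Nonempty (Fin L) := ⟨⟨0, hL⟩⟩
  haveI : Nonempty (Fin n) := ⟨⟨0, hn⟩⟩
  have hlg0 : Real.log (1 - ρ) ≤ 0 := Real.log_nonpos (by linarith [hρ.2]) (by linarith [hρ.1])
  -- L-level matrix and the weight vector W
  set Bm : Matrix (Fin L) (Fin L) ℝ := Matrix.of B with hBm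
  have hBrow : ∀ ℓ, ∑ ℓ', Bm ℓ ℓ' < 1 := by
    intro ℓ
    have h1 := hrow ℓ
    have h2 := hb0 ℓ
    have h3 : ∑ ℓ', Bm ℓ ℓ' = ∑ ℓ', B ℓ ℓ' := rfl
    rw [h3]
    linarith
  have hdetB : (1 - Bm).det ≠ 0 :=
    SDAux.det_one_sub_ne_zero Bm (fun i j => hB i j) hBrow
  have hdetBt : (1 - Bmᵀ).det ≠ 0 := by
    have h : (1 : Matrix (Fin L) (Fin L) ℝ) - Bmᵀ = (1 - Bm)ᵀ := by
      rw [Matrix.transpose_sub, Matrix.transpose_one]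
    rw [h, Matrix.det_transpose]
    exact hdetB
  set W : Fin L → ℝ := ((1 - Bmᵀ)⁻¹).mulVec a0 with hWdef
  have hWeq : (1 - Bmᵀ) *ᵥ W = a0 := by
    rw [hWdef, Matrix.mulVec_mulVec, Matrix.mul_nonsing_inv _ (isUnit_iff_ne_zero.2 hdetBt),
      Matrix.one_mulVec]
  have hWcomp : ∀ ℓ, W ℓ = a0 ℓ + ∑ ℓ'', B ℓ'' ℓ * W ℓ'' := by
    intro ℓ
    have h := congrFun hWeq ℓ
    rw [Matrix.sub_mulVec] at h
    simp only [Pi.sub_apply, Matrix.one_mulVec] at h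
    have h2 : (Bmᵀ *ᵥ W) ℓ = ∑ ℓ'', B ℓ'' ℓ * W ℓ'' := rfl
    rw [h2] at h
    linarith
  have hWpos : ∀ ℓ, 0 ≤ W ℓ := by
    set cmax : ℝ := univ.sup' Finset.univ_nonempty (fun ℓ => ∑ ℓ', B ℓ ℓ') with hcmax
    have hcmax_lt : cmax < 1 := by
      rw [hcmax, Finset.sup'_lt_iff]
      exact fun ℓ _ => hBrow ℓ
    have hcmax_row : ∀ ℓ, ∑ ℓ', B ℓ ℓ' ≤ cmax := fun ℓ =>
      Finset.le_sup' (f := fun ℓ => ∑ ℓ', B ℓ ℓ') (Finset.mem_univ ℓ)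
    have hcmax0 : 0 ≤ cmax :=
      le_trans (Finset.sum_nonneg fun ℓ' _ => hB _ _) (hcmax_row (Classical.arbitrary _))
    exact SDAux.solution_nonneg Bm a0 W (fun i j => hB i j) cmax hcmax0 hcmax_lt
      (fun i => hcmax_row i) (fun ℓ => (ha0 ℓ).le) (fun ℓ => hWcomp ℓ)
  -- the master formula
  have main : ∀ Q' : Setoid (Fin n), What a0 b0 ρ r phiSum (AQ B Q')
      = (∑ i : Firm L n, W i.1 / n * (b0 i.1 * Real.log (b0 i.1)))
        + Real.log (1-ρ) * (r0/((n:ℝ)*n))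
          * ∑ ℓ, (W ℓ * ((n:ℝ) * B ℓ ℓ)
              + W ℓ * (∑ ℓ' ∈ univ.filter (fun ℓ' => ¬ℓ' = ℓ), B ℓ ℓ')
                * (∑ c : Fin n, SDAux.GG Q' c)) := by
    intro Q'
    have hArow : ∀ i : Firm L n, ∑ j, AQ B Q' i j < 1 := by
      intro i
      rw [SDAux.AQ_rowsum]
      have h1 := hrow i.1
      have h2 := hb0 i.1
      linarith
    have hdetA : (1 - AQ B Q').det ≠ 0 :=
      SDAux.det_one_sub_ne_zero _ (SDAux.AQ_nonneg B hB Q') hArow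
    have hvm : (fun i : Firm L n => W i.1 / n) ᵥ* (1 - AQ B Q') = a0n n a0 := by
      funext j
      show ∑ i : Firm L n, W i.1 / n * (1 - AQ B Q') i j = a0 j.1 / n
      have e : ∀ i : Firm L n, W i.1 / n * (1 - AQ B Q') i j
          = W i.1 / n * (1 : Matrix (Firm L n) (Firm L n) ℝ) i j
            - W i.1 / n * AQ B Q' i j := by
        intro i
        rw [Matrix.sub_apply]
        ring
      rw [Finset.sum_congr rfl fun i _ => e i, Finset.sum_sub_distrib]
      have e1 : ∑ i : Firm L n, W i.1 / n * (1 : Matrix (Firm L n) (Firm L n) ℝ) i j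
          = W j.1 / n := by
        simp [Matrix.one_apply]
      rw [e1, SDAux.AQ_colsum B Q' W j, div_sub_div_same]
      have e3 : ∑ ℓ, W ℓ * B ℓ j.1 = ∑ ℓ, B ℓ j.1 * W ℓ :=
        Finset.sum_congr rfl fun ℓ _ => mul_comm _ _
      rw [e3]
      have := hWcomp j.1
      congr 1
      linarith
    have hwinv : a0n n a0 ᵥ* (1 - AQ B Q')⁻¹ = (fun i : Firm L n => W i.1 / n) :=
      SDAux.vecMul_inv _ hdetA _ _ hvm
    have hterm : ∀ K : Finset (Firm L n × Firm L n),
        a0n n a0 ⬝ᵥ ((1 - AQ B Q')⁻¹.mulVec (uK b0 ρ phiSum (AQ B Q') K))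
          = (∑ i : Firm L n, W i.1 / n * (b0 i.1 * Real.log (b0 i.1)))
            + ∑ p ∈ K, (Real.log (1-ρ) * (W p.1.1 / n * AQ B Q' p.1 p.2)) := by
      intro K
      rw [Matrix.dotProduct_mulVec, hwinv]
      show ∑ i : Firm L n, W i.1 / n * uK b0 ρ phiSum (AQ B Q') K i = _
      have e : ∀ i : Firm L n, W i.1 / n * uK b0 ρ phiSum (AQ B Q') K i
          = W i.1 / n * (b0 i.1 * Real.log (b0 i.1))
            + ∑ j : Firm L n,
              (if (i,j) ∈ K then Real.log (1-ρ) * (W i.1 / n * AQ B Q' i j) else 0) := by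
        intro i
        show W i.1 / n * (phiSum (AQ B Q') K i * Real.log (1-ρ) + b0 i.1 * Real.log (b0 i.1)) = _
        have e2 : phiSum (AQ B Q') K i
            = ∑ j : Firm L n, (if (i,j) ∈ K then AQ B Q' i j else 0) := by
          show ∑ j ∈ univ.filter (fun j => (i, j) ∈ K ∧ 0 < AQ B Q' i j), AQ B Q' i j = _
          rw [Finset.sum_filter]
          refine Finset.sum_congr rfl fun j _ => ?_
          by_cases h1 : (i,j) ∈ K
          · by_cases h2 : 0 < AQ B Q' i j
            · rw [if_pos ⟨h1,h2⟩, if_pos h1]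
            · rw [if_neg, if_pos h1]
              · have h3 := SDAux.AQ_nonneg B hB Q' i j
                have h4 : AQ B Q' i j = 0 := le_antisymm (not_lt.1 h2) h3
                rw [h4]
              · rintro ⟨-, hh⟩; exact h2 hh
          · rw [if_neg, if_neg h1]
            rintro ⟨hh, -⟩; exact h1 hh
        rw [e2, Finset.sum_mul, mul_add, Finset.mul_sum, add_comm]
        congr 1
        refine Finset.sum_congr rfl fun j _ => ?_
        by_cases h : (i,j) ∈ K
        · rw [if_pos h, if_pos h]; ring
        · rw [if_neg h, if_neg h]; ring
      rw [Finset.sum_congr rfl fun i _ => e i, Finset.sum_add_distrib]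
      congr 1
      rw [SDAux.sum_indicator K
        (fun p : Firm L n × Firm L n => Real.log (1-ρ) * (W p.1.1 / n * AQ B Q' p.1 p.2))]
      exact (Fintype.sum_prod_type
        (f := fun p : Firm L n × Firm L n =>
          if p ∈ K then Real.log (1-ρ) * (W p.1.1 / n * AQ B Q' p.1 p.2) else 0)).symm
    unfold What
    rw [Finset.sum_congr rfl fun K _ => by rw [hterm K]]
    rw [SDAux.expectation (fun p : Firm L n × Firm L n => r p.1 p.2)
      (∑ i : Firm L n, W i.1 / n * (b0 i.1 * Real.log (b0 i.1)))
      (fun p : Firm L n × Firm L n => Real.log (1-ρ) * (W p.1.1 / n * AQ B Q' p.1 p.2))]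
    congr 1
    rw [Fintype.sum_prod_type]
    have e1 : ∀ i : Firm L n,
        ∑ j : Firm L n, r i j * (Real.log (1-ρ) * (W i.1 / n * AQ B Q' i j))
        = Real.log (1-ρ) * (r0/n) * (W i.1 / n)
            * (B i.1 i.1 + (∑ ℓ' ∈ univ.filter (fun ℓ' => ¬ℓ' = i.1), B i.1 ℓ')
                * SDAux.GG Q' i.2) := by
      intro i
      rw [← SDAux.AQ_rowsum_dist B Q' i, Finset.mul_sum]
      refine Finset.sum_congr rfl fun j _ => ?_
      have hd : SDAux.dd i.2 j.2 = |(i.2.val:ℝ) - (j.2.val:ℝ)| := rfl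
      rw [hrdef i j, ← hd]
      ring
    rw [Finset.sum_congr rfl fun i _ => e1 i, Fintype.sum_prod_type]
    have e4 : ∀ ℓ : Fin L, ∑ c : Fin n,
        (Real.log (1-ρ) * (r0/n) * (W ℓ / n)
          * (B ℓ ℓ + (∑ ℓ' ∈ univ.filter (fun ℓ' => ¬ℓ' = ℓ), B ℓ ℓ') * SDAux.GG Q' c))
        = Real.log (1-ρ) * (r0/((n:ℝ)*n))
          * (W ℓ * ((n:ℝ) * B ℓ ℓ)
            + W ℓ * (∑ ℓ' ∈ univ.filter (fun ℓ' => ¬ℓ' = ℓ), B ℓ ℓ')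
              * (∑ c : Fin n, SDAux.GG Q' c)) := by
      intro ℓ
      rw [← Finset.mul_sum, Finset.sum_add_distrib, Finset.sum_const, ← Finset.mul_sum,
        nsmul_eq_mul, Finset.card_univ, Fintype.card_fin]
      ring
    rw [Finset.sum_congr rfl fun ℓ _ => e4 ℓ, ← Finset.mul_sum]
  -- monotonicity in g
  have hmono : ∀ Q1 Q2 : Setoid (Fin n),
      (∑ c : Fin n, SDAux.GG Q1 c) ≤ (∑ c : Fin n, SDAux.GG Q2 c) →
      What a0 b0 ρ r phiSum (AQ B Q2) ≤ What a0 b0 ρ r phiSum (AQ B Q1) := by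
    intro Q1 Q2 hg12
    rw [main Q1, main Q2]
    have hcoef : Real.log (1-ρ) * (r0/((n:ℝ)*n)) ≤ 0 :=
      mul_nonpos_of_nonpos_of_nonneg hlg0 (div_nonneg hr00 (by positivity))
    have hsummono : ∑ ℓ, (W ℓ * ((n:ℝ) * B ℓ ℓ)
              + W ℓ * (∑ ℓ' ∈ univ.filter (fun ℓ' => ¬ℓ' = ℓ), B ℓ ℓ')
                * (∑ c : Fin n, SDAux.GG Q1 c))
        ≤ ∑ ℓ, (W ℓ * ((n:ℝ) * B ℓ ℓ)
              + W ℓ * (∑ ℓ' ∈ univ.filter (fun ℓ' => ¬ℓ' = ℓ), B ℓ ℓ')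
                * (∑ c : Fin n, SDAux.GG Q2 c)) := by
      refine Finset.sum_le_sum fun ℓ _ => ?_
      refine add_le_add (le_refl _) ?_
      refine mul_le_mul_of_nonneg_left hg12 ?_
      exact mul_nonneg (hWpos ℓ) (Finset.sum_nonneg fun ℓ' _ => hB _ _)
    have := mul_le_mul_of_nonpos_left hsummono hcoef
    linarith
  exact ⟨hmono ⊥ Q (SDAux.g_ge_bot Q), hmono Q ⊤ (SDAux.g_le_top hn0 Q)⟩

end
end
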